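/- Let ρ ∈ (0,1) and ε > 0 satisfy ρ(2 + ε) = 1. Define V : [0,1] → ℝ by V(m) = m²/(2(1−ρ)) for m ≤ ε and V(m) = −ε/(2(1−ρ)) + m/(2ρ) for m > ε. Then: (a) V is continuous at m = ε; (b) V is monotone increasing on [0,1]; (c) for m ≤ ε, V satisfies V(m) = m²/2 + ρ·V(m); and (d) for m > ε, setting m' = −m² + (2+ε)m − ε, V satisfies V(m) = m²/2 + ρ·V(m'). -/

import Mathlib

open Set

/-- Closed-form equilibrium value function of the solvable two-state MFG:
under the parameter constraint `ρ(2+ε) = 1`, the piecewise function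
`V(m) = m²/(2(1−ρ))` for `m ≤ ε`, `V(m) = −ε/(2(1−ρ)) + m/(2ρ)` for `m > ε`
is continuous at `ε`, monotone on `[0,1]`, and satisfies the Bellman
recursions in both regimes. -/
theorem solvable_mfg_value_function (ρ ε : ℝ) (hρ0 : 0 < ρ) (hρ1 : ρ < 1)
    (hε : 0 < ε) (hconstraint : ρ * (2 + ε) = 1)
    (V : ℝ → ℝ)
    (hV : ∀ m : ℝ, V m = if m ≤ ε then m ^ 2 / (2 * (1 - ρ))
      else -ε / (2 * (1 - ρ)) + m / (2 * ρ)) :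
    ContinuousAt V ε ∧
    MonotoneOn V (Set.Icc 0 1) ∧
    (∀ m ∈ Set.Icc (0 : ℝ) 1, m ≤ ε → V m = m ^ 2 / 2 + ρ * V m) ∧
    (∀ m ∈ Set.Icc (0 : ℝ) 1, ε < m →
      V m = m ^ 2 / 2 + ρ * V (-m ^ 2 + (2 + ε) * m - ε)) := by
  have h1ρ : (0:ℝ) < 1 - ρ := by linarith
  have hρne : (2 * ρ) ≠ 0 := by positivity
  have h1ρne : (2 * (1 - ρ)) ≠ 0 := by positivity
  -- boundary equality
  have hbd : ε ^ 2 / (2 * (1 - ρ)) = -ε / (2 * (1 - ρ)) + ε / (2 * ρ) := by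
    field_simp
    nlinarith [hconstraint]
  have hVfun : V = fun m => if m ≤ ε then m ^ 2 / (2 * (1 - ρ))
      else -ε / (2 * (1 - ρ)) + m / (2 * ρ) := funext hV
  refine ⟨?_, ?_, ?_, ?_⟩
  · rw [hVfun]
    refine Continuous.continuousAt ?_
    refine Continuous.if_le (by continuity) (by continuity) continuous_id
      continuous_const ?_
    intro x hx
    subst hx
    simpa using hbd
  · intro a ha b hb hab
    rw [hV a, hV b]
    rcases le_or_gt a ε with haε | haε <;> rcases le_or_gt b ε with hbε | hbε
    · rw [if_pos haε, if_pos hbε]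
      have : a ^ 2 ≤ b ^ 2 := by nlinarith [ha.1]
      exact div_le_div_of_nonneg_right this (by positivity) |>.trans_eq rfl
    · rw [if_pos haε, if_neg (not_le.mpr hbε)]
      have h1 : a ^ 2 / (2 * (1 - ρ)) ≤ ε ^ 2 / (2 * (1 - ρ)) := by
        have : a ^ 2 ≤ ε ^ 2 := by nlinarith [ha.1]
        exact div_le_div_of_nonneg_right this (by positivity)
      have h2 : -ε / (2 * (1 - ρ)) + ε / (2 * ρ) ≤ -ε / (2 * (1 - ρ)) + b / (2 * ρ) := by
        have : ε / (2 * ρ) ≤ b / (2 * ρ) :=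
          div_le_div_of_nonneg_right hbε.le (by positivity)
        linarith
      linarith [hbd]
    · linarith
    · rw [if_neg (not_le.mpr haε), if_neg (not_le.mpr hbε)]
      have : a / (2 * ρ) ≤ b / (2 * ρ) := div_le_div_of_nonneg_right hab (by positivity)
      linarith
  · intro m _ hm
    rw [hV m, if_pos hm]
    field_simp
    ring
  · intro m hm hmε
    have hm' : ε < -m ^ 2 + (2 + ε) * m - ε := by nlinarith [hm.2]
    rw [hV m, hV (-m ^ 2 + (2 + ε) * m - ε), if_neg (not_le.mpr hmε),
      if_neg (not_le.mpr hm')]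
    have h2ε : (2:ℝ) + ε ≠ 0 := by linarith
    have hρeq : ρ = 1 / (2 + ε) := by
      field_simp
      linarith [hconstraint]
    rw [hρeq]
    have h1ε : (1:ℝ) + ε ≠ 0 := by linarith
    have hne : 1 - 1 / (2 + ε) ≠ 0 := by
      rw [sub_ne_zero]
      intro h
      have : (2:ℝ) + ε = 1 := by
        field_simp at h
        linarith
      linarith
    have h3 : (2:ℝ) + ε * 2 ≠ 0 := by positivity
    have hc : ((2:ℝ) + ε * 2)⁻¹ * (2 + ε * 2) = 1 := inv_mul_cancel₀ h3
    field_simp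
    have h4 : (2:ℝ) + ε - 1 ≠ 0 := by linarith
    field_simp
    ring
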